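/- For any prime p and integer q coprime to p, |def(p;q,1)| ≤ def evaluated at q = 1, i.e. |def(p;q,1)| ≤ (1/3)(p-1)(p-2), where def(p;q,1) = -4p · Σ_{k=0}^{p-1} ((k/p))·((qk/p)) and ((·)) is the Rademacher sawtooth function. -/

import Mathlib

/-- The Rademacher sawtooth function. -/
noncomputable def sawtooth (z : ℝ) : ℝ :=
  if Int.fract z = 0 then 0 else Int.fract z - 1/2

/-- The signature defect `def(p;q,1) = -4p ∑_{k=0}^{p-1} ((k/p))((qk/p))`. -/
noncomputable def sigDef (p : ℕ) (q : ℤ) : ℝ :=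
  -4 * p * ∑ k ∈ Finset.range p, sawtooth ((k : ℝ) / p) * sawtooth ((q : ℝ) * k / p)

lemma sawtooth_congr {x y : ℝ} (h : Int.fract x = Int.fract y) :
    sawtooth x = sawtooth y := by
  simp [sawtooth, h]

lemma sum_range_id' (n : ℕ) : ∑ k ∈ Finset.range n, (k : ℝ) = n * (n - 1) / 2 := by
  induction n with
  | zero => simp
  | succ m ih => rw [Finset.sum_range_succ, ih]; push_cast; ring

lemma sum_range_sq' (n : ℕ) :
    ∑ k ∈ Finset.range n, (k : ℝ) ^ 2 = n * (n - 1) * (2 * n - 1) / 6 := by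
  induction n with
  | zero => simp
  | succ m ih => rw [Finset.sum_range_succ, ih]; push_cast; ring

lemma sawtooth_sq_sum (p : ℕ) (hp : 0 < p) :
    ∑ k ∈ Finset.range p, (sawtooth ((k : ℝ) / p)) ^ 2
      = ((p : ℝ) - 1) * ((p : ℝ) - 2) / (12 * p) := by
  have hp0 : (p : ℝ) ≠ 0 := Nat.cast_ne_zero.mpr hp.ne'
  have hpR : (0 : ℝ) < p := Nat.cast_pos.mpr hp
  have key : ∀ k ∈ Finset.range p,
      (sawtooth ((k : ℝ) / p)) ^ 2
        = ((k : ℝ) / p - 1/2) ^ 2 - (if k = 0 then (1/4 : ℝ) else 0) := by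
    intro k hk
    have hk' : k < p := Finset.mem_range.mp hk
    have hfr : Int.fract ((k : ℝ) / p) = (k : ℝ) / p := by
      apply Int.fract_eq_self.mpr
      constructor
      · positivity
      · rw [div_lt_one hpR]; exact_mod_cast hk'
    by_cases h0 : k = 0
    · subst h0; simp [sawtooth]; norm_num
    · have hkpos : (0 : ℝ) < k := by
        exact_mod_cast Nat.pos_of_ne_zero h0
      have : (k : ℝ) / p ≠ 0 := by positivity
      simp [sawtooth, hfr, this, h0]
  rw [Finset.sum_congr rfl key, Finset.sum_sub_distrib, Finset.sum_ite_eq']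
  have h0mem : 0 ∈ Finset.range p := Finset.mem_range.mpr hp
  rw [if_pos h0mem]
  have expand : ∀ k ∈ Finset.range p,
      ((k : ℝ) / p - 1/2) ^ 2 = (k : ℝ) ^ 2 * ((p : ℝ)⁻¹) ^ 2 - (k : ℝ) * (p : ℝ)⁻¹ + 1/4 := by
    intro k _; field_simp; ring
  rw [Finset.sum_congr rfl expand, Finset.sum_add_distrib, Finset.sum_sub_distrib,
    ← Finset.sum_mul, ← Finset.sum_mul, Finset.sum_const, Finset.card_range,
    nsmul_eq_mul, sum_range_id' p, sum_range_sq' p]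
  field_simp
  ring

lemma sawtooth_q_sq_sum (p : ℕ) (hp : p.Prime) (q : ℤ) (hq : Int.gcd q p = 1) :
    ∑ k ∈ Finset.range p, (sawtooth ((q : ℝ) * k / p)) ^ 2
      = ∑ k ∈ Finset.range p, (sawtooth ((k : ℝ) / p)) ^ 2 := by
  haveI : NeZero p := ⟨hp.pos.ne'⟩
  have hp0 : (p : ℝ) ≠ 0 := Nat.cast_ne_zero.mpr hp.pos.ne'
  set g : ZMod p → ℝ := fun x => (sawtooth ((x.val : ℝ) / p)) ^ 2 with hg
  -- rewrite each term via ZMod value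
  have step1 : ∀ k : ℕ, (sawtooth ((q : ℝ) * k / p)) ^ 2 = g ((q : ZMod p) * (k : ZMod p)) := by
    intro k
    set v : ℕ := ((q : ZMod p) * (k : ZMod p)).val with hv
    have hcast : ((q * (k : ℤ) : ℤ) : ZMod p) = (q : ZMod p) * (k : ZMod p) := by push_cast; ring
    have hval : ((v : ℤ)) = (q * (k : ℤ)) % p := by
      rw [hv, ← hcast, ZMod.val_intCast]
    have hfr : Int.fract ((q : ℝ) * k / p)
        = Int.fract (((v : ℝ)) / p) := by
      apply Int.fract_eq_fract.mpr
      refine ⟨(q * (k : ℤ)) / p, ?_⟩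
      have hdm : (p : ℤ) * ((q * (k : ℤ)) / p) + (v : ℤ) = q * (k : ℤ) := by
        rw [hval]; exact Int.mul_ediv_add_emod _ _
      have hR : (p : ℝ) * (((q * (k : ℤ)) / p : ℤ) : ℝ) + (v : ℝ) = (q : ℝ) * k := by
        exact_mod_cast congrArg (fun z : ℤ => (z : ℝ)) hdm
      rw [div_sub_div_same]
      rw [div_eq_iff hp0]
      linarith [hR]
    show _ = (sawtooth ((v : ℝ) / p)) ^ 2
    rw [sawtooth_congr hfr]
  simp only [step1]
  -- sum over range p equals sum over ZMod p
  have sumZ : ∀ f : ZMod p → ℝ, ∑ k ∈ Finset.range p, f (k : ZMod p) = ∑ x : ZMod p, f x := by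
    intro f
    apply Finset.sum_nbij' (f := fun k : ℕ => f (k : ZMod p)) (g := f) (t := Finset.univ)
      (fun k => (k : ZMod p)) (fun x => x.val)
    · intro a _; exact Finset.mem_univ _
    · intro x _; exact Finset.mem_range.mpr (ZMod.val_lt x)
    · intro a ha; exact ZMod.val_cast_of_lt (Finset.mem_range.mp ha)
    · intro x _; exact ZMod.natCast_rightInverse x
    · intro a _; rfl
  rw [sumZ (fun x => g ((q : ZMod p) * x))]
  haveI : Fact p.Prime := ⟨hp⟩
  have hq0 : (q : ZMod p) ≠ 0 := by
    intro h
    have hdvd : (p : ℤ) ∣ q := (ZMod.intCast_zmod_eq_zero_iff_dvd q p).mp h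
    have h2 : p ∣ q.natAbs := by simpa using Int.natAbs_dvd_natAbs.mpr hdvd
    have hg1 : Nat.gcd q.natAbs p = 1 := by simpa [Int.gcd] using hq
    have hp1 : p = 1 := Nat.dvd_one.mp (hg1 ▸ Nat.dvd_gcd h2 dvd_rfl)
    exact hp.one_lt.ne' hp1
  have hperm : ∑ x : ZMod p, g ((q : ZMod p) * x) = ∑ x : ZMod p, g x := by
    simpa [Equiv.mulLeft₀] using Equiv.sum_comp (Equiv.mulLeft₀ (q : ZMod p) hq0) g
  rw [hperm, ← sumZ g]
  refine Finset.sum_congr rfl fun k hk => ?_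
  show (sawtooth (((k : ZMod p).val : ℝ) / p)) ^ 2 = _
  rw [ZMod.val_cast_of_lt (Finset.mem_range.mp hk)]

theorem abs_sigDef_le (p : ℕ) (hp : p.Prime) (q : ℤ) (hq : Int.gcd q p = 1) :
    |sigDef p q| ≤ (1/3) * ((p : ℝ) - 1) * ((p : ℝ) - 2) := by
  have hpR : (0 : ℝ) < p := Nat.cast_pos.mpr hp.pos
  have hp2 : (2 : ℝ) ≤ p := by exact_mod_cast hp.two_le
  set S : ℝ := ∑ k ∈ Finset.range p, sawtooth ((k : ℝ) / p) * sawtooth ((q : ℝ) * k / p) with hS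
  set A : ℝ := ((p : ℝ) - 1) * ((p : ℝ) - 2) / (12 * p) with hA
  have hA0 : 0 ≤ A := by
    rw [hA]
    have : (0:ℝ) ≤ ((p : ℝ) - 1) * ((p : ℝ) - 2) := by nlinarith
    positivity
  have hCS : S ^ 2 ≤ A ^ 2 := by
    have := Finset.sum_mul_sq_le_sq_mul_sq (Finset.range p)
      (fun k => sawtooth ((k : ℝ) / p)) (fun k => sawtooth ((q : ℝ) * k / p))
    rw [sawtooth_q_sq_sum p hp q hq, sawtooth_sq_sum p hp.pos] at this
    calc S ^ 2 ≤ A * A := this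
      _ = A ^ 2 := by ring
  have habs : |S| ≤ A := by
    rw [← Real.sqrt_sq_eq_abs]
    calc Real.sqrt (S ^ 2) ≤ Real.sqrt (A ^ 2) := Real.sqrt_le_sqrt hCS
      _ = A := Real.sqrt_sq hA0
  have : |sigDef p q| = 4 * p * |S| := by
    rw [sigDef, ← hS, abs_mul]
    rw [abs_of_nonpos (by nlinarith : (-4 : ℝ) * p ≤ 0)]
    ring
  rw [this]
  calc 4 * (p : ℝ) * |S| ≤ 4 * p * A := by nlinarith [abs_nonneg S]
    _ = (1/3) * ((p : ℝ) - 1) * ((p : ℝ) - 2) := by rw [hA]; field_simp; ring
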